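/- Let (ξ_i, 𝔉_i) be square-integrable martingale differences, S_n = Σ ξ_i, B_n(y) = Σ ξ_i² 1_{ξ_i > y} + Σ E[ξ_i² 1_{ξ_i ≤ y} | 𝔉_{i-1}]. Then for all x, y ≥ 0 and every p > 1, P(S_n ≥ x B_n(y)) ≤ (E[exp{-(p-1) x²/(2(1 + xy/3)) B_n(y)}])^{1/p}. -/

import Mathlib

open MeasureTheory Real Finset

-- (C) exp u ≤ 1 + u + u²/2 for u ≤ 0
lemma auxC {u : ℝ} (hu : u ≤ 0) : Real.exp u ≤ 1 + u + u ^ 2 / 2 := by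
  set s : ℝ := -u with hs
  have hs0 : 0 ≤ s := by simp [hs]; linarith
  have hq : 1 + s + s ^ 2 / 2 ≤ Real.exp s := Real.quadratic_le_exp_of_nonneg hs0
  have hE : Real.exp u = (Real.exp s)⁻¹ := by rw [hs, Real.exp_neg]; simp
  have hEpos : 0 < Real.exp s := Real.exp_pos s
  rw [hE]
  have h1 : (Real.exp s)⁻¹ ≤ (1 + s + s ^ 2 / 2)⁻¹ := by
    apply inv_anti₀ (by positivity) hq
  refine h1.trans ?_
  rw [inv_le_iff_one_le_mul₀ (by positivity)]
  have hu2 : u = -s := by rw [hs]; ring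
  rw [hu2]
  nlinarith [sq_nonneg s, sq_nonneg (s^2)]

-- (B) exp (v - v²/2) ≤ 1 + v for v ≥ 0
lemma auxB {v : ℝ} (hv : 0 ≤ v) : Real.exp (v - v ^ 2 / 2) ≤ 1 + v := by
  set F : ℝ → ℝ := fun t => (1 + t) * Real.exp (t ^ 2 / 2 - t) with hF
  have hderiv : ∀ t : ℝ, HasDerivAt F (Real.exp (t ^ 2 / 2 - t) * t ^ 2) t := by
    intro t
    have h1 : HasDerivAt (fun t : ℝ => t ^ 2 / 2 - t) (t - 1) t := by
      have := ((hasDerivAt_pow 2 t).div_const 2).sub (hasDerivAt_id t)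
      exact this.congr_deriv (by norm_num)
    have h2 : HasDerivAt (fun t : ℝ => Real.exp (t ^ 2 / 2 - t))
        (Real.exp (t ^ 2 / 2 - t) * (t - 1)) t := h1.exp
    have h3 := ((hasDerivAt_id t).const_add (1 : ℝ)).mul h2
    exact h3.congr_deriv (by simp only [id]; ring)
  have hmono : MonotoneOn F (Set.Ici (0 : ℝ)) := by
    apply monotoneOn_of_deriv_nonneg (convex_Ici 0)
    · exact (Continuous.continuousOn (by continuity))
    · intro t _
      exact (hderiv t).differentiableAt.differentiableWithinAt
    · intro t _
      rw [(hderiv t).deriv]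
      positivity
  have key : (1 : ℝ) ≤ (1 + v) * Real.exp (v ^ 2 / 2 - v) := by
    have h01 := hmono (Set.mem_Ici.2 le_rfl) (Set.mem_Ici.2 hv) hv
    simpa [hF] using h01
  have hpos : 0 < Real.exp (v ^ 2 / 2 - v) := Real.exp_pos _
  have hpos2 : 0 < Real.exp (v - v ^ 2 / 2) := Real.exp_pos _
  have hmul : Real.exp (v - v ^ 2 / 2) * Real.exp (v ^ 2 / 2 - v) = 1 := by
    rw [← Real.exp_add]; norm_num
  nlinarith [mul_le_mul_of_nonneg_left key hpos2.le]

lemma fact_ge_geo (k : ℕ) : (2:ℝ) * 3 ^ k ≤ (Nat.factorial (k + 2) : ℝ) := by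
  induction k with
  | zero => norm_num [Nat.factorial]
  | succ k ih =>
    have h1 : ((k + 3) : ℝ) ≥ 3 := by push_cast; linarith [Nat.cast_nonneg (α := ℝ) k]
    have h2 : (Nat.factorial (k + 3) : ℝ) = (k + 3) * Nat.factorial (k + 2) := by
      rw [show k + 3 = (k + 2) + 1 by ring, Nat.factorial_succ]
      push_cast; ring
    have hpos : (0:ℝ) < 2 * 3 ^ k := by positivity
    calc (2:ℝ) * 3 ^ (k+1) = 3 * (2 * 3 ^ k) := by ring
      _ ≤ 3 * (Nat.factorial (k + 2) : ℝ) := by nlinarith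
      _ ≤ (k + 3) * (Nat.factorial (k + 2) : ℝ) := by
          have : (0:ℝ) ≤ (Nat.factorial (k+2) : ℝ) := by positivity
          nlinarith
      _ = (Nat.factorial (k + 3) : ℝ) := h2.symm
  
-- (A) exp u ≤ 1 + u + u²/(2(1-u/3)) for 0 ≤ u < 3
lemma auxA {u : ℝ} (h0 : 0 ≤ u) (h3 : u < 3) :
    Real.exp u ≤ 1 + u + u ^ 2 / (2 * (1 - u / 3)) := by
  have hgeo : u / 3 < 1 := by linarith
  have hgeo0 : 0 ≤ u / 3 := by positivity
  have hsum : Summable (fun n : ℕ => u ^ n / (Nat.factorial n : ℝ)) :=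
    Real.summable_pow_div_factorial u
  have hexp : Real.exp u = ∑' n : ℕ, u ^ n / (Nat.factorial n : ℝ) := by
    rw [Real.exp_eq_exp_ℝ, NormedSpace.exp_eq_tsum_div]
  have hsum1 : Summable (fun n : ℕ => u ^ (n+1) / (Nat.factorial (n+1) : ℝ)) := by
    exact_mod_cast (summable_nat_add_iff 1).2 hsum
  have hsum2 : Summable (fun n : ℕ => u ^ (n+2) / (Nat.factorial (n+2) : ℝ)) := by
    exact_mod_cast (summable_nat_add_iff 2).2 hsum
  have hsplit : Real.exp u = 1 + u + ∑' n : ℕ, u ^ (n+2) / (Nat.factorial (n+2) : ℝ) := by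
    rw [hexp, Summable.tsum_eq_zero_add hsum, Summable.tsum_eq_zero_add hsum1]
    simp [Nat.factorial]
    ring
  have hgsum : Summable (fun n : ℕ => u ^ 2 / 2 * (u / 3) ^ n) :=
    (summable_geometric_of_lt_one hgeo0 hgeo).mul_left _
  have hterm : ∀ n : ℕ, u ^ (n+2) / (Nat.factorial (n+2) : ℝ) ≤ u ^ 2 / 2 * (u / 3) ^ n := by
    intro n
    have h1 : u ^ 2 / 2 * (u / 3) ^ n = u ^ (n+2) / (2 * 3 ^ n) := by
      rw [div_pow, pow_add]
      field_simp
    rw [h1]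
    exact div_le_div_of_nonneg_left (by positivity) (by positivity) (fact_ge_geo n)
  have htail : ∑' n : ℕ, u ^ (n+2) / (Nat.factorial (n+2) : ℝ)
      ≤ u ^ 2 / 2 * (1 - u/3)⁻¹ := by
    calc ∑' n : ℕ, u ^ (n+2) / (Nat.factorial (n+2) : ℝ)
        ≤ ∑' n : ℕ, u ^ 2 / 2 * (u / 3) ^ n := Summable.tsum_le_tsum hterm hsum2 hgsum
      _ = u ^ 2 / 2 * (1 - u/3)⁻¹ := by
          rw [tsum_mul_left, tsum_geometric_of_lt_one hgeo0 hgeo]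
  have heq : u ^ 2 / 2 * (1 - u/3)⁻¹ = u ^ 2 / (2 * (1 - u / 3)) := by
    field_simp
  linarith [hsplit, htail, heq ▸ htail]

-- master pointwise inequality
lemma auxD {l y : ℝ} (hl : 0 ≤ l) (hy : 0 ≤ y) (hly : l * y < 3) (t : ℝ) :
    Real.exp (l * t - l ^ 2 / (2 * (1 - l * y / 3)) * (if y < t then t ^ 2 else 0))
      ≤ 1 + l * t + l ^ 2 / (2 * (1 - l * y / 3)) * (if t ≤ y then t ^ 2 else 0) := by
  have hden : 0 < 1 - l * y / 3 := by nlinarith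
  set g : ℝ := l ^ 2 / (2 * (1 - l * y / 3)) with hg
  have hg2 : l ^ 2 / 2 ≤ g := by
    rw [hg]
    apply div_le_div_of_nonneg_left (by positivity) (by positivity)
    nlinarith [mul_nonneg hl hy]
  have hgnn : 0 ≤ g := le_trans (by positivity) hg2
  by_cases h : y < t
  · rw [if_pos h, if_neg (not_le.2 h)]
    have ht0 : 0 ≤ t := le_trans hy h.le
    have hv : 0 ≤ l * t := mul_nonneg hl ht0
    have hgt : (l * t) ^ 2 / 2 ≤ g * t ^ 2 := by
      have := mul_le_mul_of_nonneg_right hg2 (sq_nonneg t)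
      calc (l * t) ^ 2 / 2 = l ^ 2 / 2 * t ^ 2 := by ring
        _ ≤ g * t ^ 2 := this
    calc Real.exp (l * t - g * t ^ 2) ≤ Real.exp (l * t - (l * t) ^ 2 / 2) := by
          apply Real.exp_le_exp.2; linarith
      _ ≤ 1 + l * t := auxB hv
      _ = 1 + l * t + g * 0 := by ring
  · push_neg at h
    rw [if_neg (not_lt.2 h), if_pos h]
    rcases le_or_gt 0 t with ht | ht
    · have hu0 : 0 ≤ l * t := mul_nonneg hl ht
      have huly : l * t ≤ l * y := mul_le_mul_of_nonneg_left h hl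
      have hu3 : l * t < 3 := lt_of_le_of_lt huly hly
      have hA := auxA hu0 hu3
      have hcmp : (l * t) ^ 2 / (2 * (1 - l * t / 3)) ≤ g * t ^ 2 := by
        have h1 : (l * t) ^ 2 / (2 * (1 - l * t / 3)) ≤ (l * t) ^ 2 / (2 * (1 - l * y / 3)) := by
          apply div_le_div_of_nonneg_left (by positivity) (by positivity)
          linarith
        have h2 : (l * t) ^ 2 / (2 * (1 - l * y / 3)) = g * t ^ 2 := by
          rw [hg]; field_simp
        linarith
      calc Real.exp (l * t - g * 0) = Real.exp (l * t) := by ring_nf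
        _ ≤ 1 + l * t + (l * t) ^ 2 / (2 * (1 - l * t / 3)) := hA
        _ ≤ 1 + l * t + g * t ^ 2 := by linarith
    · have hu0 : l * t ≤ 0 := mul_nonpos_of_nonneg_of_nonpos hl ht.le
      have hC := auxC hu0
      have hgt : (l * t) ^ 2 / 2 ≤ g * t ^ 2 := by
        have := mul_le_mul_of_nonneg_right hg2 (sq_nonneg t)
        calc (l * t) ^ 2 / 2 = l ^ 2 / 2 * t ^ 2 := by ring
          _ ≤ g * t ^ 2 := this
      calc Real.exp (l * t - g * 0) = Real.exp (l * t) := by ring_nf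
        _ ≤ 1 + l * t + (l * t) ^ 2 / 2 := hC
        _ ≤ 1 + l * t + g * t ^ 2 := by linarith

-- boundedness
lemma auxE {l y : ℝ} (hl : 0 ≤ l) (hy : 0 ≤ y) (hly : l * y < 3) (t : ℝ) :
    Real.exp (l * t - l ^ 2 / (2 * (1 - l * y / 3)) * (if y < t then t ^ 2 else 0))
      ≤ Real.exp (l * y) + Real.exp 1 := by
  have hden : 0 < 1 - l * y / 3 := by nlinarith
  set g : ℝ := l ^ 2 / (2 * (1 - l * y / 3)) with hg
  have hg2 : l ^ 2 / 2 ≤ g := by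
    rw [hg]
    apply div_le_div_of_nonneg_left (by positivity) (by positivity)
    nlinarith [mul_nonneg hl hy]
  by_cases h : y < t
  · rw [if_pos h]
    have ht0 : 0 ≤ t := le_trans hy h.le
    have hgt : (l * t) ^ 2 / 2 ≤ g * t ^ 2 := by
      have := mul_le_mul_of_nonneg_right hg2 (sq_nonneg t)
      calc (l * t) ^ 2 / 2 = l ^ 2 / 2 * t ^ 2 := by ring
        _ ≤ g * t ^ 2 := this
    have h1 : l * t - g * t ^ 2 ≤ 1 := by nlinarith [sq_nonneg (l * t - 1)]
    calc Real.exp (l * t - g * t ^ 2) ≤ Real.exp 1 := Real.exp_le_exp.2 h1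
      _ ≤ Real.exp (l * y) + Real.exp 1 := by linarith [Real.exp_pos (l * y), Real.exp_pos (1:ℝ)]
  · push_neg at h
    rw [if_neg (not_lt.2 h)]
    have h1 : l * t - g * 0 ≤ l * y := by
      have := mul_le_mul_of_nonneg_left h hl
      linarith
    calc Real.exp (l * t - g * 0) ≤ Real.exp (l * y) := Real.exp_le_exp.2 h1
      _ ≤ Real.exp (l * y) + Real.exp 1 := by linarith [Real.exp_pos (l * y), Real.exp_pos (1:ℝ)]

-- abstract supermartingale bound
lemma superm' {Ω : Type*} {m : MeasurableSpace Ω} {μ : Measure Ω} [IsProbabilityMeasure μ]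
    (𝔉 : ℕ → MeasurableSpace Ω) (hle : ∀ i, 𝔉 i ≤ m) (hmono : Monotone 𝔉)
    (φ ψ : ℕ → Ω → ℝ)
    (hφmeas : ∀ i, StronglyMeasurable[𝔉 i] (φ i))
    (hψmeas : ∀ i, 1 ≤ i → StronglyMeasurable[𝔉 (i - 1)] (ψ i))
    (C : ℝ) (hC : ∀ i ω, Real.exp (φ i ω) ≤ C)
    (hψnn : ∀ i, 0 ≤ᵐ[μ] ψ i)
    (hcond : ∀ i, 1 ≤ i →
      μ[fun ω => Real.exp (φ i ω) | 𝔉 (i - 1)] ≤ᵐ[μ] fun ω => 1 + ψ i ω)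
    (hC0 : 0 < C) (n : ℕ) :
    ∫ ω, Real.exp (∑ i ∈ Finset.Icc 1 n, (φ i ω - ψ i ω)) ∂μ ≤ 1 := by
  set Z : ℕ → Ω → ℝ := fun k ω => Real.exp (∑ i ∈ Finset.Icc 1 k, (φ i ω - ψ i ω)) with hZdef
  have hψae : ∀ᵐ ω ∂μ, ∀ i, 0 ≤ ψ i ω := ae_all_iff.2 hψnn
  -- measurability of Z k w.r.t. 𝔉 k
  have hZmeas : ∀ k, StronglyMeasurable[𝔉 k] (Z k) := by
    intro k
    have hsum : Measurable[𝔉 k] (fun ω => ∑ i ∈ Finset.Icc 1 k, (φ i ω - ψ i ω)) := by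
      apply Finset.measurable_sum
      intro i hi
      rw [Finset.mem_Icc] at hi
      have h1 : Measurable[𝔉 k] (φ i) :=
        ((hφmeas i).mono (hmono hi.2)).measurable
      have h2 : Measurable[𝔉 k] (ψ i) :=
        ((hψmeas i hi.1).mono (hmono (le_trans (Nat.sub_le i 1) hi.2))).measurable
      exact h1.sub h2
    exact (hsum.exp).stronglyMeasurable
  -- a.e. bound on Z k
  have hZbd : ∀ k, ∀ᵐ ω ∂μ, Z k ω ≤ C ^ k := by
    intro k
    filter_upwards [hψae] with ω hω
    have : Z k ω = ∏ i ∈ Finset.Icc 1 k, Real.exp (φ i ω - ψ i ω) := by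
      rw [hZdef]; exact Real.exp_sum _ _
    rw [this]
    calc ∏ i ∈ Finset.Icc 1 k, Real.exp (φ i ω - ψ i ω)
        ≤ ∏ i ∈ Finset.Icc 1 k, C := by
          apply Finset.prod_le_prod (fun i _ => (Real.exp_pos _).le)
          intro i _
          calc Real.exp (φ i ω - ψ i ω) ≤ Real.exp (φ i ω) := by
                apply Real.exp_le_exp.2; linarith [hω i]
            _ ≤ C := hC i ω
      _ = C ^ k := by rw [Finset.prod_const, Nat.card_Icc]; norm_num
  have hZint : ∀ k, Integrable (Z k) μ := by
    intro k
    apply Integrable.mono' (integrable_const (C ^ k))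
      (((hZmeas k).mono (hle k)).aestronglyMeasurable)
    filter_upwards [hZbd k] with ω h
    rw [Real.norm_eq_abs, abs_of_pos (Real.exp_pos _)]
    exact h
  have key : ∀ k, ∫ ω, Z k ω ∂μ ≤ 1 := by
    intro k
    induction k with
    | zero =>
      have : Z 0 = fun _ => 1 := by
        funext ω
        rw [hZdef]
        norm_num
      rw [this]
      simp
    | succ k IH =>
      set W : Ω → ℝ := fun ω => Real.exp (φ (k + 1) ω) with hWdef
      set G : Ω → ℝ := fun ω => Z k ω * Real.exp (-ψ (k + 1) ω) with hGdef
      have hsplit : Z (k + 1) = G * W := by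
        funext ω
        show Z (k+1) ω = G ω * W ω
        rw [hZdef, hGdef, hWdef]
        simp only []
        rw [← Finset.insert_Icc_right_eq_Icc_add_one (by omega : 1 ≤ k + 1),
          Finset.sum_insert (by simp), ← Real.exp_add, ← Real.exp_add]
        congr 1
        ring
      have hψ' : StronglyMeasurable[𝔉 k] (ψ (k + 1)) := by
        have h := hψmeas (k + 1) (by omega)
        rwa [Nat.add_sub_cancel] at h
      have hG : StronglyMeasurable[𝔉 k] G := by
        have h1 : Measurable[𝔉 k] (fun ω => Real.exp (-ψ (k + 1) ω)) :=
          (hψ'.measurable.neg).exp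
        exact (hZmeas k).mul h1.stronglyMeasurable
      have hWint : Integrable W μ := by
        apply Integrable.mono' (integrable_const C)
          (((hφmeas (k+1)).mono (hle _)).measurable.exp.stronglyMeasurable.aestronglyMeasurable)
        filter_upwards with ω
        rw [Real.norm_eq_abs, abs_of_pos (Real.exp_pos _)]
        exact hC _ ω
      have hGW : Integrable (G * W) μ := hsplit ▸ hZint (k + 1)
      have h1 : μ[Z (k + 1) | 𝔉 k] =ᵐ[μ] G * μ[W | 𝔉 k] := by
        rw [hsplit]
        exact condExp_mul_of_stronglyMeasurable_left hG hGW hWint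
      have h2 : μ[W | 𝔉 k] ≤ᵐ[μ] fun ω => 1 + ψ (k + 1) ω := by
        have h := hcond (k + 1) (by omega)
        rwa [Nat.add_sub_cancel] at h
      have h3 : μ[Z (k + 1) | 𝔉 k] ≤ᵐ[μ] Z k := by
        filter_upwards [h1, h2, hψnn (k + 1)] with ω e1 e2 e3
        rw [e1]
        show G ω * (μ[W | 𝔉 k]) ω ≤ Z k ω
        have hG0 : 0 ≤ G ω := mul_nonneg (Real.exp_pos _).le (Real.exp_pos _).le
        have hZ0 : 0 ≤ Z k ω := (Real.exp_pos _).le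
        have hee : Real.exp (-ψ (k+1) ω) * (1 + ψ (k+1) ω) ≤ 1 := by
          have ha : 1 + ψ (k+1) ω ≤ Real.exp (ψ (k+1) ω) := by
            linarith [Real.add_one_le_exp (ψ (k+1) ω)]
          have hb := mul_le_mul_of_nonneg_left ha (Real.exp_pos (-ψ (k+1) ω)).le
          rwa [← Real.exp_add, neg_add_cancel, Real.exp_zero] at hb
        calc G ω * (μ[W | 𝔉 k]) ω ≤ G ω * (1 + ψ (k + 1) ω) :=
              mul_le_mul_of_nonneg_left e2 hG0
          _ = Z k ω * (Real.exp (-ψ (k+1) ω) * (1 + ψ (k+1) ω)) := by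
              rw [hGdef]; ring
          _ ≤ Z k ω * 1 := mul_le_mul_of_nonneg_left hee hZ0
          _ = Z k ω := mul_one _
      calc ∫ ω, Z (k + 1) ω ∂μ = ∫ ω, (μ[Z (k + 1) | 𝔉 k]) ω ∂μ :=
            (integral_condExp (hle k)).symm
        _ ≤ ∫ ω, Z k ω ∂μ := integral_mono_ae integrable_condExp (hZint k) h3
        _ ≤ 1 := IH
  exact key n

lemma condstep {Ω : Type*} {m : MeasurableSpace Ω} {μ : Measure Ω} [IsProbabilityMeasure μ]
    {F : MeasurableSpace Ω} (hF : F ≤ m)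
    {f : Ω → ℝ} (hfm : Measurable[m] f) (hf2 : Integrable (fun ω => f ω ^ 2) μ)
    (hmart : μ[f | F] =ᵐ[μ] 0)
    {l y : ℝ} (hl : 0 ≤ l) (hy : 0 ≤ y) (hly : l * y < 3) :
    μ[fun ω => Real.exp (l * f ω
        - l ^ 2 / (2 * (1 - l * y / 3)) * (if y < f ω then f ω ^ 2 else 0)) | F]
      ≤ᵐ[μ] fun ω => 1 + l ^ 2 / (2 * (1 - l * y / 3)) *
        (μ[fun ω' => if f ω' ≤ y then f ω' ^ 2 else 0 | F]) ω := by
  set g : ℝ := l ^ 2 / (2 * (1 - l * y / 3)) with hgdef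
  set T : Ω → ℝ := fun ω => if f ω ≤ y then f ω ^ 2 else 0 with hTdef
  have hTmeas : Measurable[m] T := by
    apply Measurable.ite (measurableSet_le hfm measurable_const)
    · exact hfm.pow_const 2
    · exact measurable_const
  have hTint : Integrable T μ := by
    apply Integrable.mono' hf2 (hTmeas.aestronglyMeasurable : AEStronglyMeasurable[m] T μ)
    filter_upwards with ω
    rw [hTdef]
    by_cases h : f ω ≤ y <;> simp [h, abs_of_nonneg (sq_nonneg (f ω)), sq_nonneg (f ω)]
  have hfint : Integrable f μ := by
    apply Integrable.mono' ((integrable_const (1:ℝ)).add hf2) (hfm.aestronglyMeasurable : AEStronglyMeasurable[m] f μ)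
    filter_upwards with ω
    rw [Real.norm_eq_abs]
    simp only [Pi.add_apply]
    nlinarith [sq_nonneg (|f ω| - 1), sq_abs (f ω), abs_nonneg (f ω)]
  have hWmeas : Measurable[m] (fun ω => Real.exp (l * f ω - g * (if y < f ω then f ω ^ 2 else 0))) := by
    apply Measurable.exp
    apply Measurable.sub (hfm.const_mul l)
    exact (Measurable.ite (measurableSet_lt measurable_const hfm) (hfm.pow_const 2)
      measurable_const).const_mul g
  have hWint : Integrable (fun ω => Real.exp (l * f ω - g * (if y < f ω then f ω ^ 2 else 0))) μ := by
    apply Integrable.mono' (integrable_const (μ := μ) (Real.exp (l * y) + Real.exp 1))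
      (hWmeas.aestronglyMeasurable : AEStronglyMeasurable[m] _ μ)
    filter_upwards with ω
    rw [Real.norm_eq_abs, abs_of_pos (Real.exp_pos _)]
    exact auxE hl hy hly (f ω)
  have hRint : Integrable (fun ω => 1 + l * f ω + g * T ω) μ :=
    ((integrable_const (1:ℝ)).add (hfint.const_mul l)).add (hTint.const_mul g)
  have cd1 : μ[fun ω => Real.exp (l * f ω - g * (if y < f ω then f ω ^ 2 else 0)) | F]
      ≤ᵐ[μ] μ[fun ω => 1 + l * f ω + g * T ω | F] := by
    apply condExp_mono hWint hRint
    filter_upwards with ω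
    exact auxD hl hy hly (f ω)
  have eA : μ[fun ω => 1 + l * f ω + g * T ω | F]
      =ᵐ[μ] μ[fun _ : Ω => (1:ℝ) | F] + μ[fun ω => l * f ω | F] + μ[fun ω => g * T ω | F] := by
    have h0 : (fun ω => 1 + l * f ω + g * T ω)
        = ((fun _ : Ω => (1:ℝ)) + fun ω => l * f ω) + fun ω => g * T ω := rfl
    rw [h0]
    have h1 := condExp_add (μ := μ) (m := F)
      ((integrable_const (1:ℝ)).add (hfint.const_mul l)) (hTint.const_mul g)
    have h2 := condExp_add (μ := μ) (m := F) (integrable_const (1:ℝ)) (hfint.const_mul l)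
    filter_upwards [h1, h2] with ω e1 e2
    simp only [Pi.add_apply] at *
    rw [e1, e2]
  have eB : μ[fun ω => l * f ω | F] =ᵐ[μ] fun _ => (0:ℝ) := by
    have h1 : μ[fun ω => l * f ω | F] =ᵐ[μ] l • μ[f | F] := condExp_smul l f F
    filter_upwards [h1, hmart] with ω e1 e2
    rw [e1]
    simp only [Pi.smul_apply, smul_eq_mul]
    rw [e2]
    simp
  have eC : μ[fun ω => g * T ω | F] =ᵐ[μ] fun ω => g * (μ[T | F]) ω := by
    have h1 : μ[fun ω => g * T ω | F] =ᵐ[μ] g • μ[T | F] := condExp_smul g T F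
    filter_upwards [h1] with ω e1
    rw [e1]
    simp
  have eD : μ[fun _ : Ω => (1:ℝ) | F] = fun _ => (1:ℝ) := condExp_const hF 1
  calc μ[fun ω => Real.exp (l * f ω - g * (if y < f ω then f ω ^ 2 else 0)) | F]
      ≤ᵐ[μ] μ[fun ω => 1 + l * f ω + g * T ω | F] := cd1
    _ ≤ᵐ[μ] fun ω => 1 + g * (μ[T | F]) ω := by
        filter_upwards [eA, eB, eC] with ω e1 e2 e3
        rw [e1]
        simp only [Pi.add_apply]
        rw [e2, e3, eD]
        simp

theorem stmt_6 {Ω : Type*} {m : MeasurableSpace Ω} {μ : Measure Ω} [IsProbabilityMeasure μ]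
    (𝔉 : ℕ → MeasurableSpace Ω) (hle : ∀ i, 𝔉 i ≤ m) (hmono : Monotone 𝔉)
    (ξ : ℕ → Ω → ℝ)
    (hadp : ∀ i, StronglyMeasurable[𝔉 i] (ξ i))
    (hsq : ∀ i, Integrable (fun ω => (ξ i ω) ^ 2) μ)
    (hmart : ∀ i : ℕ, 1 ≤ i → μ[ξ i | 𝔉 (i - 1)] =ᵐ[μ] 0)
    (n : ℕ) (x y : ℝ) (hx : 0 ≤ x) (hy : 0 ≤ y) (p : ℝ) (hp : 1 < p)
    (S B : Ω → ℝ)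
    (hS : S = fun ω => ∑ i ∈ Finset.Icc 1 n, ξ i ω)
    (hB : B = fun ω =>
      (∑ i ∈ Finset.Icc 1 n, if y < ξ i ω then (ξ i ω) ^ 2 else 0)
        + ∑ i ∈ Finset.Icc 1 n,
            (μ[fun ω' => if ξ i ω' ≤ y then (ξ i ω') ^ 2 else 0 | 𝔉 (i - 1)]) ω) :
    (μ {ω | x * B ω ≤ S ω}).toReal ≤
      (∫ ω, Real.exp (-(p - 1) * (x ^ 2 / (2 * (1 + x * y / 3))) * B ω) ∂μ) ^ (1 / p) := by
  have hSapp : ∀ ω, S ω = ∑ i ∈ Finset.Icc 1 n, ξ i ω := fun ω => by rw [hS]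
  have hBapp : ∀ ω, B ω = (∑ i ∈ Finset.Icc 1 n, if y < ξ i ω then (ξ i ω) ^ 2 else 0)
      + ∑ i ∈ Finset.Icc 1 n,
          (μ[fun ω' => if ξ i ω' ≤ y then (ξ i ω') ^ 2 else 0 | 𝔉 (i - 1)]) ω :=
    fun ω => by rw [hB]
  -- basic constants
  have hd : (0:ℝ) < 1 + x * y / 3 := by nlinarith [mul_nonneg hx hy]
  set l : ℝ := x / (1 + x * y / 3) with hldef
  set c : ℝ := x ^ 2 / (2 * (1 + x * y / 3)) with hcdef
  have hl : 0 ≤ l := by rw [hldef]; positivity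
  have hc0 : 0 ≤ c := by rw [hcdef]; positivity
  have hly : l * y < 3 := by
    rw [hldef, div_mul_eq_mul_div, div_lt_iff₀ hd]
    nlinarith [mul_nonneg hx hy]
  have hden : (0:ℝ) < 1 - l * y / 3 := by nlinarith
  have hgc : l ^ 2 / (2 * (1 - l * y / 3)) = c := by
    rw [hldef, hcdef]
    rw [div_pow]
    rw [div_eq_div_iff (by positivity) (by positivity)]
    field_simp
    ring
  have hlx : l * x = 2 * c := by
    rw [hldef, hcdef]
    field_simp
  -- conjugate exponents
  set q : ℝ := p / (p - 1) with hqdef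
  have hpq : p.HolderConjugate q := (Real.holderConjugate_iff_eq_conjExponent hp).2 hqdef
  have hq1 : 1 < q := hpq.symm.lt
  have hq0 : (0:ℝ) < q := by linarith
  have hqne : q ≠ 0 := ne_of_gt hq0
  have hpq' : p / q = p - 1 := hpq.div_conj_eq_sub_one
  -- measurability
  have hξm : ∀ i, Measurable[m] (ξ i) := fun i => ((hadp i).mono (hle i)).measurable
  have hCEm : ∀ i : ℕ, Measurable[m]
      (μ[fun ω' => if ξ i ω' ≤ y then (ξ i ω') ^ 2 else 0 | 𝔉 (i - 1)]) :=
    fun i => ((stronglyMeasurable_condExp).mono (hle (i - 1))).measurable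
  have hposm : ∀ i : ℕ, Measurable[m] (fun ω => if y < ξ i ω then (ξ i ω) ^ 2 else 0) :=
    fun i => Measurable.ite (measurableSet_lt measurable_const (hξm i))
      ((hξm i).pow_const 2) measurable_const
  have hSm : Measurable[m] S := by
    rw [hS]; exact Finset.measurable_sum _ (fun i _ => hξm i)
  have hBm : Measurable[m] B := by
    rw [hB]
    exact (Finset.measurable_sum _ (fun i _ => hposm i)).add
      (Finset.measurable_sum _ (fun i _ => hCEm i))
  have hA : MeasurableSet {ω | x * B ω ≤ S ω} :=
    measurableSet_le (hBm.const_mul x) hSm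
  -- a.e. nonnegativity of conditional expectations
  have hCEae : ∀ᵐ ω ∂μ, ∀ i : ℕ,
      0 ≤ (μ[fun ω' => if ξ i ω' ≤ y then (ξ i ω') ^ 2 else 0 | 𝔉 (i - 1)]) ω := by
    rw [ae_all_iff]
    intro i
    apply condExp_nonneg
    filter_upwards with ω
    by_cases h : ξ i ω ≤ y <;> simp [h, sq_nonneg]
  have hBnn : ∀ᵐ ω ∂μ, 0 ≤ B ω := by
    filter_upwards [hCEae] with ω hω
    rw [hBapp]
    apply add_nonneg
    · apply Finset.sum_nonneg
      intro i _
      by_cases h : y < ξ i ω <;> simp [h, sq_nonneg]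
    · exact Finset.sum_nonneg (fun i _ => hω i)
  -- the supermartingale bound
  set C : ℝ := Real.exp (l * y) + Real.exp 1 with hCdef
  have hC0 : (0:ℝ) < C := by rw [hCdef]; positivity
  have hC1 : (1:ℝ) ≤ C := by
    rw [hCdef]
    nlinarith [Real.one_le_exp (mul_nonneg hl hy), Real.exp_pos (1:ℝ)]
  have hCle : ∀ (i : ℕ) (ω : Ω),
      Real.exp (l * ξ i ω - c * (if y < ξ i ω then ξ i ω ^ 2 else 0)) ≤ C := by
    intro i ω
    have h := auxE hl hy hly (ξ i ω)
    rwa [hgc] at h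
  have hsuper : ∫ ω, Real.exp (∑ i ∈ Finset.Icc 1 n,
      (l * ξ i ω - c * (if y < ξ i ω then ξ i ω ^ 2 else 0)
        - c * (μ[fun ω' => if ξ i ω' ≤ y then ξ i ω' ^ 2 else 0 | 𝔉 (i - 1)]) ω)) ∂μ ≤ 1 := by
    refine superm' 𝔉 hle hmono
      (fun i ω => l * ξ i ω - c * (if y < ξ i ω then ξ i ω ^ 2 else 0))
      (fun i ω => c * (μ[fun ω' => if ξ i ω' ≤ y then ξ i ω' ^ 2 else 0 | 𝔉 (i - 1)]) ω)
      ?_ ?_ C ?_ ?_ ?_ hC0 n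
    · intro i
      have h1 : Measurable[𝔉 i] (ξ i) := (hadp i).measurable
      have h2 : Measurable[𝔉 i] (fun ω => l * ξ i ω
          - c * (if y < ξ i ω then ξ i ω ^ 2 else 0)) := by
        apply Measurable.sub (h1.const_mul l)
        exact (Measurable.ite (measurableSet_lt measurable_const h1)
          (h1.pow_const 2) measurable_const).const_mul c
      exact h2.stronglyMeasurable
    · intro i _
      exact ((stronglyMeasurable_condExp).measurable.const_mul c).stronglyMeasurable
    · exact hCle
    · intro i
      filter_upwards [hCEae] with ω hω
      exact mul_nonneg hc0 (hω i)
    · intro i hi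
      have h := condstep (hle (i - 1)) (hξm i) (hsq i) (hmart i hi) hl hy hly
      rwa [hgc] at h
  -- rewrite the exponent
  have hsplit : ∀ ω, l * S ω - c * B ω = ∑ i ∈ Finset.Icc 1 n,
      (l * ξ i ω - c * (if y < ξ i ω then ξ i ω ^ 2 else 0)
        - c * (μ[fun ω' => if ξ i ω' ≤ y then ξ i ω' ^ 2 else 0 | 𝔉 (i - 1)]) ω) := by
    intro ω
    rw [hSapp, hBapp]
    simp only [Finset.sum_sub_distrib, Finset.mul_sum, mul_add]
    ring
  have hZle1 : ∫ ω, Real.exp (l * S ω - c * B ω) ∂μ ≤ 1 := by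
    calc ∫ ω, Real.exp (l * S ω - c * B ω) ∂μ
        = ∫ ω, Real.exp (∑ i ∈ Finset.Icc 1 n,
            (l * ξ i ω - c * (if y < ξ i ω then ξ i ω ^ 2 else 0)
              - c * (μ[fun ω' => if ξ i ω' ≤ y then ξ i ω' ^ 2 else 0 | 𝔉 (i - 1)]) ω)) ∂μ := by
          apply integral_congr_ae
          filter_upwards with ω
          rw [hsplit ω]
      _ ≤ 1 := hsuper
  -- a.e. bound on the exponential
  have hZae : ∀ᵐ ω ∂μ, Real.exp (l * S ω - c * B ω) ≤ C ^ n := by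
    filter_upwards [hCEae] with ω hω
    have h1 : l * S ω - c * B ω ≤ ∑ i ∈ Finset.Icc 1 n,
        (l * ξ i ω - c * (if y < ξ i ω then ξ i ω ^ 2 else 0)) := by
      rw [hsplit ω, Finset.sum_sub_distrib]
      have : 0 ≤ ∑ i ∈ Finset.Icc 1 n,
          c * (μ[fun ω' => if ξ i ω' ≤ y then ξ i ω' ^ 2 else 0 | 𝔉 (i - 1)]) ω :=
        Finset.sum_nonneg (fun i _ => mul_nonneg hc0 (hω i))
      linarith
    calc Real.exp (l * S ω - c * B ω)
        ≤ Real.exp (∑ i ∈ Finset.Icc 1 n,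
            (l * ξ i ω - c * (if y < ξ i ω then ξ i ω ^ 2 else 0))) := Real.exp_le_exp.2 h1
      _ = ∏ i ∈ Finset.Icc 1 n,
            Real.exp (l * ξ i ω - c * (if y < ξ i ω then ξ i ω ^ 2 else 0)) := Real.exp_sum _ _
      _ ≤ ∏ i ∈ Finset.Icc 1 n, C :=
          Finset.prod_le_prod (fun i _ => (Real.exp_pos _).le) (fun i _ => hCle i ω)
      _ = C ^ n := by rw [Finset.prod_const, Nat.card_Icc]; norm_num
  -- the two Hölder factors
  set U : Ω → ℝ := fun ω => Real.exp ((l * S ω - c * B ω) / q) with hUdef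
  set V : Ω → ℝ := fun ω => Real.exp (-(c / q) * B ω) with hVdef
  have hUm : Measurable[m] U := (((hSm.const_mul l).sub (hBm.const_mul c)).div_const q).exp
  have hVm : Measurable[m] V := ((hBm.const_mul (-(c/q)))).exp
  have hUbd : ∀ᵐ ω ∂μ, U ω ≤ 1 + C ^ n := by
    filter_upwards [hZae] with ω h
    have hCn : (0:ℝ) ≤ C ^ n := by positivity
    rw [hUdef]
    rcases le_or_gt (l * S ω - c * B ω) 0 with ht | ht
    · have h1 : (l * S ω - c * B ω) / q ≤ 0 := div_nonpos_of_nonpos_of_nonneg ht hq0.le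
      have h2 : Real.exp ((l * S ω - c * B ω) / q) ≤ 1 := by
        calc Real.exp ((l * S ω - c * B ω) / q) ≤ Real.exp 0 := Real.exp_le_exp.2 h1
          _ = 1 := Real.exp_zero
      linarith
    · have h1 : (l * S ω - c * B ω) / q ≤ l * S ω - c * B ω :=
        div_le_self ht.le hq1.le
      have h2 : Real.exp ((l * S ω - c * B ω) / q) ≤ C ^ n :=
        le_trans (Real.exp_le_exp.2 h1) h
      linarith
  have hVbd : ∀ᵐ ω ∂μ, V ω ≤ 1 := by
    filter_upwards [hBnn] with ω h
    rw [hVdef]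
    calc Real.exp (-(c / q) * B ω) ≤ Real.exp 0 := by
          apply Real.exp_le_exp.2
          apply mul_nonpos_of_nonpos_of_nonneg _ h
          · simp only [neg_nonpos]
            positivity
      _ = 1 := Real.exp_zero
  have hUnn : 0 ≤ᵐ[μ] U := Filter.Eventually.of_forall (fun ω => (Real.exp_pos _).le)
  have hVnn : 0 ≤ᵐ[μ] V := Filter.Eventually.of_forall (fun ω => (Real.exp_pos _).le)
  -- pointwise bound by the indicator
  have hexpUV : ∀ ω, U ω * V ω = Real.exp ((l * S ω - c * B ω) / q + -(c / q) * B ω) := by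
    intro ω
    rw [hUdef, hVdef, ← Real.exp_add]
  have hEeq : ∀ ω, (l * S ω - c * B ω) / q + -(c / q) * B ω = l * (S ω - x * B ω) / q := by
    intro ω
    field_simp
    linear_combination B ω * hlx
  have hind : ∀ ω, Set.indicator {ω | x * B ω ≤ S ω} (1 : Ω → ℝ) ω ≤ U ω * V ω := by
    intro ω
    rw [Set.indicator_apply]
    split_ifs with hmem
    · rw [hexpUV, hEeq, Pi.one_apply]
      apply Real.one_le_exp
      have hSB : 0 ≤ S ω - x * B ω := by
        have := hmem
        simp only [Set.mem_setOf_eq] at this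
        linarith
      exact div_nonneg (mul_nonneg hl hSB) hq0.le
    · exact mul_nonneg (Real.exp_pos _).le (Real.exp_pos _).le
  -- integrability of U * V
  have hUVint : Integrable (fun ω => U ω * V ω) μ := by
    apply Integrable.mono' (integrable_const (μ := μ) ((1 + C ^ n) * 1))
      ((hUm.mul hVm).aestronglyMeasurable : AEStronglyMeasurable _ μ)
    filter_upwards [hUbd, hVbd] with ω h1 h2
    rw [Real.norm_eq_abs, Pi.mul_apply, abs_of_nonneg (mul_nonneg (Real.exp_pos _).le (Real.exp_pos _).le)]
    apply mul_le_mul h1 h2 (Real.exp_pos _).le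
    positivity
  have hindint : Integrable (Set.indicator {ω | x * B ω ≤ S ω} (1 : Ω → ℝ)) μ :=
    (integrable_const (1:ℝ)).indicator hA
  -- Hölder
  have hUmem : MemLp U (ENNReal.ofReal q) μ := by
    apply MemLp.of_bound (hUm.aestronglyMeasurable : AEStronglyMeasurable U μ) (1 + C ^ n)
    filter_upwards [hUbd] with ω h
    rw [Real.norm_eq_abs, abs_of_pos (Real.exp_pos _)]
    exact h
  have hVmem : MemLp V (ENNReal.ofReal p) μ := by
    apply MemLp.of_bound (hVm.aestronglyMeasurable : AEStronglyMeasurable V μ) 1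
    filter_upwards [hVbd] with ω h
    rw [Real.norm_eq_abs, abs_of_pos (Real.exp_pos _)]
    exact h
  have hhold : ∫ ω, U ω * V ω ∂μ
      ≤ (∫ ω, U ω ^ q ∂μ) ^ (1 / q) * (∫ ω, V ω ^ p ∂μ) ^ (1 / p) :=
    integral_mul_le_Lp_mul_Lq_of_nonneg hpq.symm hUnn hVnn hUmem hVmem
  -- the first factor is at most 1
  have hUq : ∫ ω, U ω ^ q ∂μ ≤ 1 := by
    have heq : ∀ ω, U ω ^ q = Real.exp (l * S ω - c * B ω) := by
      intro ω
      rw [hUdef, ← Real.exp_mul, div_mul_cancel₀ _ hqne]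
    calc ∫ ω, U ω ^ q ∂μ = ∫ ω, Real.exp (l * S ω - c * B ω) ∂μ :=
          integral_congr_ae (Filter.Eventually.of_forall heq)
      _ ≤ 1 := hZle1
  have hUqnn : 0 ≤ ∫ ω, U ω ^ q ∂μ :=
    integral_nonneg (fun ω => Real.rpow_nonneg (Real.exp_pos _).le q)
  have hfirst : (∫ ω, U ω ^ q ∂μ) ^ (1 / q) ≤ 1 :=
    Real.rpow_le_one hUqnn hUq (by positivity)
  -- identify the second factor
  have hVp : ∀ ω, V ω ^ p = Real.exp (-(p - 1) * c * B ω) := by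
    intro ω
    rw [hVdef, ← Real.exp_mul]
    congr 1
    have h1 : -(c / q) * B ω * p = -(c * B ω) * (p / q) := by ring
    rw [h1, hpq']
    ring
  have hVint : ∫ ω, V ω ^ p ∂μ = ∫ ω, Real.exp (-(p - 1) * c * B ω) ∂μ :=
    integral_congr_ae (Filter.Eventually.of_forall hVp)
  have hVpnn : 0 ≤ (∫ ω, V ω ^ p ∂μ) ^ (1 / p) :=
    Real.rpow_nonneg (integral_nonneg (fun ω => Real.rpow_nonneg (Real.exp_pos _).le p)) _
  -- conclusion
  calc (μ {ω | x * B ω ≤ S ω}).toReal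
      = ∫ ω, Set.indicator {ω | x * B ω ≤ S ω} (1 : Ω → ℝ) ω ∂μ :=
        (integral_indicator_one hA).symm
    _ ≤ ∫ ω, U ω * V ω ∂μ := integral_mono hindint hUVint hind
    _ ≤ (∫ ω, U ω ^ q ∂μ) ^ (1 / q) * (∫ ω, V ω ^ p ∂μ) ^ (1 / p) := hhold
    _ ≤ 1 * (∫ ω, V ω ^ p ∂μ) ^ (1 / p) := mul_le_mul_of_nonneg_right hfirst hVpnn
    _ = (∫ ω, V ω ^ p ∂μ) ^ (1 / p) := one_mul _
    _ = (∫ ω, Real.exp (-(p - 1) * c * B ω) ∂μ) ^ (1 / p) := by rw [hVint]
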